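/- Let 𝒱 = {v_1, …, v_n} be nonempty closed subsets of ℝ³ (EuclideanSpace ℝ (Fin 3)) with union 𝒪_𝒱, let v^l_1, …, v^l_m be nonempty closed convex sets with attachment map σ : {1,…,m} → {1,…,n} such that each v_{σ(j)} is convex and v^l_j ∩ v_{σ(j)} ≠ ∅, let f : ℝ → ℝ be a shaping function with f(t) > 0 for all t > 0, and let α ∈ [0,1]. Then the occupied space of the interpolated collision constraint satisfies {x | min(SDF_𝒱(x), SDF^α_{v_{σ(1)}→v^l_1}(x), …, SDF^α_{v_{σ(m)}→v^l_m}(x)) ≤ 0} = 𝒪_𝒱 ∪ ⋃_{j=1}^m ( v^l_j ∩ v^α_{v_{σ(j)}→v^l_j} ). -/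

import Mathlib

/-- Signed distance function of a set `v`. -/
noncomputable def sdf (v : Set (EuclideanSpace ℝ (Fin 3)))
    (x : EuclideanSpace ℝ (Fin 3)) : ℝ :=
  Metric.infDist x v - Metric.infDist x vᶜ

/-- The occupied space of the interpolated collision constraint: for nonempty closed
sets `v 0, …, v (n-1)` and nonempty closed convex leaf objects `vl 0, …, vl (m-1)`,
each attached via `σ` to a convex `v (σ j)` it intersects, a shaping function `f`
(with `f t > 0` for `t > 0`) and `α ∈ [0,1]`, the sublevel set of
`min(SDF_𝒱, SDF^α_{v (σ 0) → vl 0}, …, SDF^α_{v (σ (m-1)) → vl (m-1)})`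
equals `𝒪_𝒱 ∪ ⋃ j, (vl j ∩ v^α_{v (σ j) → vl j})`. -/

lemma sdf_pos_of_not_mem {v : Set (EuclideanSpace ℝ (Fin 3))} (hne : v.Nonempty)
    (hcl : IsClosed v) {x : EuclideanSpace ℝ (Fin 3)} (hx : x ∉ v) : 0 < sdf v x := by
  have h1 : 0 < Metric.infDist x v := (hcl.notMem_iff_infDist_pos hne).1 hx
  have h2 : Metric.infDist x vᶜ = 0 := Metric.infDist_zero_of_mem hx
  simp only [sdf, h2, sub_zero]; exact h1

lemma sdf_le_zero_iff {v : Set (EuclideanSpace ℝ (Fin 3))} (hne : v.Nonempty)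
    (hcl : IsClosed v) (x : EuclideanSpace ℝ (Fin 3)) : sdf v x ≤ 0 ↔ x ∈ v := by
  constructor
  · intro h
    by_contra hx
    exact absurd h (not_le.2 (sdf_pos_of_not_mem hne hcl hx))
  · intro hx
    have h1 : Metric.infDist x v = 0 := Metric.infDist_zero_of_mem hx
    have h2 : 0 ≤ Metric.infDist x vᶜ := Metric.infDist_nonneg
    simp only [sdf, h1, zero_sub]
    linarith

theorem occupied_space_interpolated_constraint {n m : ℕ} (hn : 0 < n) (hm : 0 < m)
    (v : Fin n → Set (EuclideanSpace ℝ (Fin 3)))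
    (hvne : ∀ i, (v i).Nonempty) (hvcl : ∀ i, IsClosed (v i))
    (vl : Fin m → Set (EuclideanSpace ℝ (Fin 3)))
    (hlne : ∀ j, (vl j).Nonempty) (hlcl : ∀ j, IsClosed (vl j))
    (hlcv : ∀ j, Convex ℝ (vl j))
    (σ : Fin m → Fin n) (hσcv : ∀ j, Convex ℝ (v (σ j)))
    (hattach : ∀ j, (vl j ∩ v (σ j)).Nonempty)
    (f : ℝ → ℝ) (hf0 : f 0 = 0) (hfmono : Monotone f)
    (hfconv : ConvexOn ℝ Set.univ f) (hfpos : ∀ t : ℝ, 0 < t → 0 < f t)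
    (α : ℝ) (hα : α ∈ Set.Icc (0 : ℝ) 1) :
    {x | min (Finset.univ.inf' ⟨⟨0, hn⟩, Finset.mem_univ _⟩ fun i => sdf (v i) x)
          (Finset.univ.inf' ⟨⟨0, hm⟩, Finset.mem_univ _⟩ fun j =>
            (1 - α) * f (sdf (v (σ j)) x) + α * f (sdf (vl j) x)) ≤ 0}
      = (⋃ i, v i) ∪
        ⋃ j, (vl j ∩ {x | (1 - α) * f (sdf (v (σ j)) x) + α * f (sdf (vl j) x) ≤ 0}) := by
  obtain ⟨hα0, hα1⟩ := hα
  ext x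
  simp only [Set.mem_setOf_eq, Set.mem_union, Set.mem_iUnion, min_le_iff,
    Finset.inf'_le_iff, Finset.mem_univ, true_and, Set.mem_inter_iff]
  erw [Finset.inf'_le_iff, Finset.inf'_le_iff]
  simp only [Finset.mem_univ, true_and]
  constructor
  · rintro (⟨i, hi⟩ | ⟨j, hj⟩)
    · exact Or.inl ⟨i, (sdf_le_zero_iff (hvne i) (hvcl i) x).1 hi⟩
    · by_cases hx : x ∈ vl j
      · exact Or.inr ⟨j, hx, hj⟩
      · left
        refine ⟨σ j, ?_⟩
        by_contra hxv
        have h1 := hfpos _ (sdf_pos_of_not_mem (hvne (σ j)) (hvcl (σ j)) hxv)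
        have h2 := hfpos _ (sdf_pos_of_not_mem (hlne j) (hlcl j) hx)
        set a := f (sdf (v (σ j)) x) with ha
        set b := f (sdf (vl j) x) with hb
        have e1 : (1 - α) * min a b ≤ (1 - α) * a :=
          mul_le_mul_of_nonneg_left (min_le_left a b) (by linarith)
        have e2 : α * min a b ≤ α * b :=
          mul_le_mul_of_nonneg_left (min_le_right a b) hα0
        have hmin : 0 < min a b := lt_min h1 h2
        nlinarith [e1, e2]
  · rintro (⟨i, hi⟩ | ⟨j, hx, hj⟩)
    · exact Or.inl ⟨i, (sdf_le_zero_iff (hvne i) (hvcl i) x).2 hi⟩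
    · exact Or.inr ⟨j, hj⟩
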